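/- Let π : (X,T) → (Y,S) be a factor map between topological dynamical systems and let (y,y') ∈ Q(Y) be a regionally proximal pair. Then there exists w ∈ Y such that (y,w) ∈ Q(Y) and (w,y') ∈ Q(Y), and moreover both pairs admit π-lifts: there exist x ∈ π⁻¹(y), u ∈ π⁻¹(w) with (x,u) ∈ Q(X), and similarly for (w,y'). -/

import Mathlib

open Set Filter TopologicalSpace

/-- The `n`-th iterate (n ∈ ℤ) of a homeomorphism. -/
def hIter {X : Type*} [TopologicalSpace X] (T : X ≃ₜ X) (n : ℤ) : X → X :=
  fun x => (T.toEquiv ^ n) x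

/-- The full orbit {Tⁿ x : n ∈ ℤ} of a point. -/
def orb {X : Type*} [TopologicalSpace X] (T : X ≃ₜ X) (x : X) : Set X :=
  Set.range fun n : ℤ => hIter T n x

/-- The orbit closure of a point. -/
def orbCl {X : Type*} [TopologicalSpace X] (T : X ≃ₜ X) (x : X) : Set X :=
  closure (orb T x)

/-- A system is minimal if it has no proper nonempty closed invariant subset. -/
def IsMinimalSys {X : Type*} [TopologicalSpace X] (T : X → X) : Prop :=
  ∀ A : Set X, IsClosed A → A.Nonempty → T '' A = A → A = Set.univ

/-- `J` is a joining of the subsystems `(K,T)` and `(L,S)`: a closed `T × S`-invariant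
subset of `K ×ˢ L` projecting onto `K` and onto `L`. -/
def IsJoiningOn {X Y : Type*} [TopologicalSpace X] [TopologicalSpace Y]
    (T : X → X) (S : Y → Y) (K : Set X) (L : Set Y) (J : Set (X × Y)) : Prop :=
  IsClosed J ∧ J ⊆ K ×ˢ L ∧ Prod.map T S '' J = J ∧
    Prod.fst '' J = K ∧ Prod.snd '' J = L

/-- The subsystems `(K,T)` and `(L,S)` are disjoint: their only joining is `K ×ˢ L`. -/
def DisjointOn {X Y : Type*} [TopologicalSpace X] [TopologicalSpace Y]
    (T : X → X) (S : Y → Y) (K : Set X) (L : Set Y) : Prop :=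
  ∀ J : Set (X × Y), IsJoiningOn T S K L J → J = K ×ˢ L

/-- (a,b) is a regionally proximal pair: there are sequences aᵢ → a, bᵢ → b and
integers nᵢ with dist(Tⁿⁱaᵢ, Tⁿⁱbᵢ) → 0. -/
def RPpair {X : Type*} [MetricSpace X] (T : X ≃ₜ X) (a b : X) : Prop :=
  ∃ (u v : ℕ → X) (n : ℕ → ℤ),
    Filter.Tendsto u Filter.atTop (nhds a) ∧
    Filter.Tendsto v Filter.atTop (nhds b) ∧
    Filter.Tendsto (fun i => dist (hIter T (n i) (u i)) (hIter T (n i) (v i)))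
      Filter.atTop (nhds 0)

lemma hIter_zero {X : Type*} [TopologicalSpace X] (T : X ≃ₜ X) (x : X) :
    hIter T 0 x = x := rfl

lemma hIter_add_one {X : Type*} [TopologicalSpace X] (T : X ≃ₜ X) (n : ℤ) (x : X) :
    hIter T (n + 1) x = hIter T n (T x) := by
  simp [hIter, zpow_add_one, Equiv.Perm.mul_apply]

lemma hIter_sub_one {X : Type*} [TopologicalSpace X] (T : X ≃ₜ X) (n : ℤ) (x : X) :
    hIter T (n - 1) x = hIter T n (T.symm x) := by
  have : (T.toEquiv ^ (n - 1)) x = (T.toEquiv ^ n * (T.toEquiv)⁻¹) x := by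
    rw [← zpow_sub_one]
  simpa [hIter, Equiv.Perm.mul_apply] using this

lemma hIter_continuous {X : Type*} [TopologicalSpace X] (T : X ≃ₜ X) (n : ℤ) :
    Continuous (hIter T n) := by
  induction n using Int.induction_on with
  | zero => exact continuous_id
  | succ k ih =>
      have : hIter T (k + 1) = hIter T k ∘ T := by
        funext x; exact hIter_add_one T k x
      rw [this]; exact ih.comp T.continuous
  | pred k ih =>
      have : hIter T (-k - 1) = hIter T (-k) ∘ T.symm := by
        funext x; exact hIter_sub_one T (-k) x
      rw [this]; exact ih.comp T.symm.continuous

lemma hIter_neg_cancel {X : Type*} [TopologicalSpace X] (T : X ≃ₜ X) (n : ℤ) (x : X) :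
    hIter T n (hIter T (-n) x) = x := by
  simp only [hIter]
  rw [← Equiv.Perm.mul_apply, ← zpow_add, add_neg_cancel]
  simp

lemma hIter_equivar {X Y : Type*} [TopologicalSpace X] [TopologicalSpace Y]
    (T : X ≃ₜ X) (S : Y ≃ₜ Y) (π : X → Y) (hπ : ∀ x, π (T x) = S (π x)) (n : ℤ) (x : X) :
    π (hIter T n x) = hIter S n (π x) := by
  have hsymm : ∀ x, π (T.symm x) = S.symm (π x) := by
    intro x
    have := hπ (T.symm x)
    rw [T.apply_symm_apply] at this
    rw [this, S.symm_apply_apply]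
  induction n using Int.induction_on generalizing x with
  | zero => rfl
  | succ k ih => rw [hIter_add_one, hIter_add_one, ih, hπ]
  | pred k ih => rw [show (-(k:ℤ) - 1) = (-k) - 1 by ring, hIter_sub_one, hIter_sub_one, ih, hsymm]

lemma dist_tendsto_zero_push {X Y : Type*} [MetricSpace X] [CompactSpace X]
    [MetricSpace Y] {π : X → Y} (hπc : Continuous π) {a b : ℕ → X}
    (h : Tendsto (fun i => dist (a i) (b i)) atTop (nhds 0)) :
    Tendsto (fun i => dist (π (a i)) (π (b i))) atTop (nhds 0) := by
  have hu : UniformContinuous π := CompactSpace.uniformContinuous_of_continuous hπc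
  rw [Metric.uniformContinuous_iff] at hu
  rw [Metric.tendsto_atTop] at h ⊢
  intro ε hε
  obtain ⟨δ, hδ, hδ'⟩ := hu ε hε
  obtain ⟨N, hN⟩ := h δ hδ
  refine ⟨N, fun n hn => ?_⟩
  have := hN n hn
  rw [Real.dist_eq, sub_zero, abs_of_nonneg dist_nonneg] at this ⊢
  exact hδ' this

lemma RPpair_push {X Y : Type*} [MetricSpace X] [CompactSpace X]
    [MetricSpace Y] (T : X ≃ₜ X) (S : Y ≃ₜ Y)
    (π : X → Y) (hπc : Continuous π) (hπ : ∀ x, π (T x) = S (π x))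
    {a b : X} (h : RPpair T a b) : RPpair S (π a) (π b) := by
  obtain ⟨u, v, n, hu, hv, hd⟩ := h
  refine ⟨fun i => π (u i), fun i => π (v i), n,
    (hπc.tendsto a).comp hu, (hπc.tendsto b).comp hv, ?_⟩
  have := dist_tendsto_zero_push hπc hd
  simpa [hIter_equivar T S π hπ] using this

/-- Let π : (X,T) → (Y,S) be a factor map and (y,y') a regionally proximal pair in Y.
Then there is w ∈ Y with (y,w), (w,y') ∈ Q(Y) such that both pairs admit π-lifts. -/
theorem stmt_14 {X Y : Type*} [MetricSpace X] [CompactSpace X]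
    [MetricSpace Y] [CompactSpace Y] (T : X ≃ₜ X) (S : Y ≃ₜ Y)
    (π : X → Y) (hπc : Continuous π) (hπs : Function.Surjective π)
    (hπ : ∀ x, π (T x) = S (π x))
    (y y' : Y) (h : RPpair S y y') :
    ∃ w : Y, RPpair S y w ∧ RPpair S w y' ∧
      (∃ x u : X, π x = y ∧ π u = w ∧ RPpair T x u) ∧
      (∃ x u : X, π x = w ∧ π u = y' ∧ RPpair T x u) := by
  obtain ⟨uy, vy, n, huy, hvy, hd⟩ := h
  choose a ha using fun i => hπs (uy i)
  choose b hb using fun i => hπs (vy i)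
  -- extract convergent subsequence of the quadruple
  set F : ℕ → (X × X) × (X × X) := fun i =>
    ((a i, b i), (hIter T (n i) (a i), hIter T (n i) (b i))) with hF
  obtain ⟨⟨⟨x, x'⟩, ⟨p, q⟩⟩, φ, hφ, hFφ⟩ := CompactSpace.tendsto_subseq F
  have hax : Tendsto (fun i => a (φ i)) atTop (nhds x) :=
    ((continuous_fst.comp continuous_fst).tendsto _).comp hFφ
  have hbx : Tendsto (fun i => b (φ i)) atTop (nhds x') :=
    ((continuous_snd.comp continuous_fst).tendsto _).comp hFφ
  have hap : Tendsto (fun i => hIter T (n (φ i)) (a (φ i))) atTop (nhds p) :=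
    ((continuous_fst.comp continuous_snd).tendsto _).comp hFφ
  have hbq : Tendsto (fun i => hIter T (n (φ i)) (b (φ i))) atTop (nhds q) :=
    ((continuous_snd.comp continuous_snd).tendsto _).comp hFφ
  have hπx : π x = y := by
    have h1 : Tendsto (fun i => π (a (φ i))) atTop (nhds (π x)) :=
      (hπc.tendsto x).comp hax
    have h2 : Tendsto (fun i => π (a (φ i))) atTop (nhds y) := by
      simpa [ha, Function.comp_def] using huy.comp (hφ.tendsto_atTop)
    exact tendsto_nhds_unique h1 h2
  have hπx' : π x' = y' := by
    have h1 : Tendsto (fun i => π (b (φ i))) atTop (nhds (π x')) :=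
      (hπc.tendsto x').comp hbx
    have h2 : Tendsto (fun i => π (b (φ i))) atTop (nhds y') := by
      simpa [hb, Function.comp_def] using hvy.comp (hφ.tendsto_atTop)
    exact tendsto_nhds_unique h1 h2
  have hπpq : π p = π q := by
    have h1 : Tendsto (fun i => dist (π (hIter T (n (φ i)) (a (φ i))))
        (π (hIter T (n (φ i)) (b (φ i))))) atTop (nhds (dist (π p) (π q))) :=
      ((hπc.tendsto p).comp hap).dist ((hπc.tendsto q).comp hbq)
    have h2 : Tendsto (fun i => dist (π (hIter T (n (φ i)) (a (φ i))))
        (π (hIter T (n (φ i)) (b (φ i))))) atTop (nhds 0) := by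
      have := hd.comp (hφ.tendsto_atTop)
      simpa [Function.comp_def, hIter_equivar T S π hπ, ha, hb] using this
    have := tendsto_nhds_unique h1 h2
    exact dist_eq_zero.mp this
  -- second extraction
  set G : ℕ → X × X := fun i =>
    (hIter T (-(n (φ i))) p, hIter T (-(n (φ i))) q) with hG
  obtain ⟨⟨u₀, u₁⟩, ψ, hψ, hGψ⟩ := CompactSpace.tendsto_subseq G
  have hcp : Tendsto (fun i => hIter T (-(n (φ (ψ i)))) p) atTop (nhds u₀) :=
    (continuous_fst.tendsto _).comp hGψ
  have hdq : Tendsto (fun i => hIter T (-(n (φ (ψ i)))) q) atTop (nhds u₁) :=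
    (continuous_snd.tendsto _).comp hGψ
  -- RPpair T x u₀
  have hR1 : RPpair T x u₀ := by
    refine ⟨fun i => a (φ (ψ i)), fun i => hIter T (-(n (φ (ψ i)))) p,
      fun i => n (φ (ψ i)), hax.comp hψ.tendsto_atTop, hcp, ?_⟩
    have h1 : Tendsto (fun i => dist (hIter T (n (φ (ψ i))) (a (φ (ψ i)))) p)
        atTop (nhds (dist p p)) :=
      ((hap.comp hψ.tendsto_atTop)).dist tendsto_const_nhds
    simpa [hIter_neg_cancel] using h1
  -- RPpair T u₁ x'
  have hR2 : RPpair T u₁ x' := by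
    refine ⟨fun i => hIter T (-(n (φ (ψ i)))) q, fun i => b (φ (ψ i)),
      fun i => n (φ (ψ i)), hdq, hbx.comp hψ.tendsto_atTop, ?_⟩
    have h1 : Tendsto (fun i => dist q (hIter T (n (φ (ψ i))) (b (φ (ψ i)))))
        atTop (nhds (dist q q)) :=
      tendsto_const_nhds.dist (hbq.comp hψ.tendsto_atTop)
    simpa [hIter_neg_cancel] using h1
  -- π u₁ = π u₀
  have hπu : π u₁ = π u₀ := by
    have h1 : Tendsto (fun i => π (hIter T (-(n (φ (ψ i)))) q)) atTop (nhds (π u₁)) :=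
      (hπc.tendsto u₁).comp hdq
    have h2 : Tendsto (fun i => π (hIter T (-(n (φ (ψ i)))) q)) atTop (nhds (π u₀)) := by
      have heq : ∀ i, π (hIter T (-(n (φ (ψ i)))) q) = π (hIter T (-(n (φ (ψ i)))) p) := by
        intro i
        rw [hIter_equivar T S π hπ, hIter_equivar T S π hπ, hπpq]
      simp only [heq]
      exact (hπc.tendsto u₀).comp hcp
    exact tendsto_nhds_unique h1 h2
  refine ⟨π u₀, ?_, ?_, ⟨x, u₀, hπx, rfl, hR1⟩, ⟨u₁, x', hπu, hπx', hR2⟩⟩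
  · have := RPpair_push T S π hπc hπ hR1
    rwa [hπx] at this
  · have := RPpair_push T S π hπc hπ hR2
    rwa [hπu, hπx'] at this
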